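/- For every positive integer N and nonnegative integer k, Σ_{n=1}^∞ n^k e^{-2πn/N} ≤ (k! / (δ_N π)^{k+1}) · N^{k+1}, where δ_N = 1 if N ≥ 4, δ_N = 1/2 if N ∈ {2,3}, and δ_N = 1/4 if N = 1. -/

import Mathlib

open Real

theorem exp_sum_bound_delta (N : ℕ) (hN : 0 < N) (k : ℕ) :
    ∑' n : ℕ, ((n + 1 : ℝ)) ^ k * Real.exp (-2 * π * (n + 1) / N) ≤
      (k.factorial : ℝ) /
        ((if 4 ≤ N then (1 : ℝ) else if N = 1 then 1 / 4 else 1 / 2) * π) ^ (k + 1) *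
        (N : ℝ) ^ (k + 1) := by
  set δ : ℝ := if 4 ≤ N then (1 : ℝ) else if N = 1 then 1 / 4 else 1 / 2 with hδdef
  have hδpos : 0 < δ := by rw [hδdef]; split_ifs <;> norm_num
  have hδ1 : δ ≤ 1 := by rw [hδdef]; split_ifs <;> norm_num
  have hNpos : (0 : ℝ) < N := by exact_mod_cast hN
  set b : ℝ := δ * π / N with hbdef
  have hbpos : 0 < b := by positivity
  set c : ℝ := 2 * π / N - b with hcdef
  have hbc : b ≤ c := by
    rw [hcdef, hbdef]
    rw [le_sub_iff_add_le]
    have : δ * π / N + δ * π / N ≤ 2 * π / N := by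
      rw [← add_div, div_le_div_iff₀ hNpos hNpos]
      nlinarith [mul_nonneg (mul_nonneg (by linarith : (0:ℝ) ≤ 1 - δ) pi_pos.le) hNpos.le]
    linarith
  have hcpos : 0 < c := lt_of_lt_of_le hbpos hbc
  have hr1 : Real.exp (-c) < 1 := exp_lt_one_iff.mpr (by linarith)
  have hr0 : 0 < Real.exp (-c) := exp_pos _
  have key : ∀ n : ℕ, ((n + 1 : ℝ)) ^ k * Real.exp (-2 * π * (n + 1) / N) ≤
      ((k.factorial : ℝ) / b ^ k) * Real.exp (-c) ^ (n + 1) := by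
    intro n
    have h1 : ((n + 1 : ℝ)) ^ k ≤ (k.factorial : ℝ) / b ^ k * Real.exp (b * (n + 1)) := by
      have := Real.pow_div_factorial_le_exp (x := b * (n + 1)) (by positivity) k
      rw [mul_pow] at this
      rw [div_mul_eq_mul_div, le_div_iff₀ (by positivity : (0:ℝ) < b ^ k)]
      rw [div_le_iff₀ (by positivity : (0:ℝ) < (k.factorial : ℝ))] at this
      nlinarith [this]
    calc ((n + 1 : ℝ)) ^ k * Real.exp (-2 * π * (n + 1) / N)
        ≤ ((k.factorial : ℝ) / b ^ k * Real.exp (b * (n + 1))) *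
            Real.exp (-2 * π * (n + 1) / N) := by
          apply mul_le_mul_of_nonneg_right h1 (exp_pos _).le
      _ = (k.factorial : ℝ) / b ^ k * Real.exp (-c) ^ (n + 1) := by
          rw [mul_assoc, ← Real.exp_add, ← Real.exp_nat_mul]
          congr 2
          rw [hcdef]
          field_simp
          push_cast
          ring
  have hsum2 : Summable (fun n : ℕ => ((k.factorial : ℝ) / b ^ k) * Real.exp (-c) ^ (n + 1)) := by
    apply Summable.mul_left
    exact (summable_geometric_of_lt_one hr0.le hr1).comp_injective (add_left_injective 1)
  have hsum1 : Summable (fun n : ℕ => ((n + 1 : ℝ)) ^ k * Real.exp (-2 * π * (n + 1) / N)) := by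
    apply Summable.of_nonneg_of_le (fun n => by positivity) key hsum2
  have hge : ∑' n : ℕ, Real.exp (-c) ^ (n + 1) = Real.exp (-c) / (1 - Real.exp (-c)) := by
    have : ∀ n : ℕ, Real.exp (-c) ^ (n + 1) = Real.exp (-c) * Real.exp (-c) ^ n := by
      intro n; rw [pow_succ]; ring
    simp_rw [this]
    rw [tsum_mul_left, tsum_geometric_of_lt_one hr0.le hr1]
    rw [div_eq_mul_inv]
  have hgeo_le : Real.exp (-c) / (1 - Real.exp (-c)) ≤ 1 / b := by
    rw [div_le_div_iff₀ (by linarith) hbpos]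
    have h2 : c + 1 ≤ Real.exp c := Real.add_one_le_exp c
    have h3 : Real.exp (-c) * Real.exp c = 1 := by rw [← Real.exp_add]; simp
    nlinarith [hr0]
  calc ∑' n : ℕ, ((n + 1 : ℝ)) ^ k * Real.exp (-2 * π * (n + 1) / N)
      ≤ ∑' n : ℕ, ((k.factorial : ℝ) / b ^ k) * Real.exp (-c) ^ (n + 1) :=
        Summable.tsum_le_tsum key hsum1 hsum2
    _ = ((k.factorial : ℝ) / b ^ k) * (Real.exp (-c) / (1 - Real.exp (-c))) := by
        rw [tsum_mul_left, hge]
    _ ≤ ((k.factorial : ℝ) / b ^ k) * (1 / b) := by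
        apply mul_le_mul_of_nonneg_left hgeo_le (by positivity)
    _ = (k.factorial : ℝ) / (δ * π) ^ (k + 1) * (N : ℝ) ^ (k + 1) := by
        rw [hbdef]
        have hπ : (0:ℝ) < π := pi_pos
        field_simp
        have hNk : (N:ℝ)^k * ((N:ℝ)⁻¹)^k = 1 := by rw [← mul_pow, mul_inv_cancel₀ hNpos.ne', one_pow]
        linear_combination (-((N:ℝ) * δ * δ ^ k * π * π ^ k)) * hNk
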